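/- arXiv:1908.06667 — 4 statements merged into one kernel-verified Lean document; each statement's English description precedes it below -/
import Mathlib

section
/- For all vertices v, w ∈ V, the standard generators σ_v and σ_w are conjugate elements of the Artin group G(Γ). -/
/-- Vertices of the Lönne graph: quadruples in `{0,1}^4`. -/
abbrev Vtx : Type := Fin 4 → Fin 2

/-- Two distinct vertices `i, j` are joined by an edge iff
`(i_μ − j_μ)·(i_ν − j_ν) ≥ 0` for all `μ, ν` (differences taken in `ℤ`). -/
def LonneEdge (i j : Vtx) : Prop :=
  i ≠ j ∧ ∀ μ ν : Fin 4,
    0 ≤ (((i μ : ℕ) : ℤ) - ((j μ : ℕ) : ℤ)) * (((i ν : ℕ) : ℤ) - ((j ν : ℕ) : ℤ))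

/-- The defining relations of the Artin group `G(Γ)`: commutation for non-edges,
braiding for edges. -/
def artinRels : Set (FreeGroup Vtx) :=
  {r | ∃ v w : Vtx,
    (v ≠ w ∧ ¬ LonneEdge v w ∧
      r = FreeGroup.of v * FreeGroup.of w * (FreeGroup.of v)⁻¹ * (FreeGroup.of w)⁻¹) ∨
    (LonneEdge v w ∧
      r = FreeGroup.of v * FreeGroup.of w * FreeGroup.of v *
        (FreeGroup.of w * FreeGroup.of v * FreeGroup.of w)⁻¹)}

/-- The Artin group `G(Γ)` of the Lönne graph. -/
abbrev ArtinG : Type := PresentedGroup artinRels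

/-- The standard generators `σ_v` of `G(Γ)`. -/
def σ (v : Vtx) : ArtinG := PresentedGroup.of v

lemma braid_rel (v w : Vtx) (h : LonneEdge v w) : σ v * σ w * σ v = σ w * σ v * σ w := by
  have hr : (FreeGroup.of v * FreeGroup.of w * FreeGroup.of v *
      (FreeGroup.of w * FreeGroup.of v * FreeGroup.of w)⁻¹) ∈ artinRels :=
    ⟨v, w, Or.inr ⟨h, rfl⟩⟩
  have h1 : (QuotientGroup.mk (FreeGroup.of v * FreeGroup.of w * FreeGroup.of v *
      (FreeGroup.of w * FreeGroup.of v * FreeGroup.of w)⁻¹) : ArtinG) = 1 :=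
    (QuotientGroup.eq_one_iff _).mpr (Subgroup.subset_normalClosure hr)
  have h2 : σ v * σ w * σ v * (σ w * σ v * σ w)⁻¹ = 1 := h1
  exact mul_inv_eq_one.mp h2

lemma edge_conj (v w : Vtx) (h : LonneEdge v w) : IsConj (σ v) (σ w) := by
  rw [isConj_iff]
  refine ⟨σ v * σ w, ?_⟩
  rw [mul_inv_eq_iff_eq_mul, braid_rel v w h]; group

lemma conj_zero (v : Vtx) : IsConj (σ v) (σ (fun _ => 0)) := by
  by_cases hv : v = fun _ => 0
  · rw [hv]
  · refine edge_conj v _ ⟨hv, fun μ ν => ?_⟩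
    simp only [Fin.val_zero, Nat.cast_zero, sub_zero]
    positivity

/-- All standard generators of `G(Γ)` are pairwise conjugate. -/
theorem generators_conjugate : ∀ v w : Vtx, IsConj (σ v) (σ w) := by
  intro v w
  exact (conj_zero v).trans (conj_zero w).symm
end

section
/- There exists a group homomorphism ψ : Br₆ → G(Γ) with ψ(t_i) = σ_{v_{i+2}} for 1 ≤ i ≤ 5, and the image of ψ lies in the centralizer of σ_{v₁}; in particular σ_{v_j} σ_{v₁} = σ_{v₁} σ_{v_j} holds in G(Γ) for every 3 ≤ j ≤ 7. -/
/-- The braid relations on `n` generators `t₁, …, t_n` (zero-indexed by `Fin n`):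
`Br_{n+1}` is the presented group on these generators. -/
def braidRels (n : ℕ) : Set (FreeGroup (Fin n)) :=
  {r | ∃ i j : Fin n,
    ((j : ℕ) = (i : ℕ) + 1 ∧
      r = FreeGroup.of i * FreeGroup.of j * FreeGroup.of i *
        (FreeGroup.of j * FreeGroup.of i * FreeGroup.of j)⁻¹) ∨
    ((i : ℕ) + 2 ≤ (j : ℕ) ∧
      r = FreeGroup.of i * FreeGroup.of j * (FreeGroup.of i)⁻¹ * (FreeGroup.of j)⁻¹)}

/-- The braid group `Br₆` on `6` strings, with `5` standard generators. -/
abbrev Br6 : Type := PresentedGroup (braidRels 5)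

/-- The sequence of vertices `v₁, …, v₇` (zero-indexed: `chainVtx k` is `v_{k+1}`). -/
def chainVtx : Fin 7 → Vtx :=
  ![![0,0,0,1], ![0,1,0,1], ![0,1,0,0], ![0,1,1,0], ![0,0,1,0], ![1,0,1,0], ![1,0,0,0]]

/-- The subchain `v₃, v₄, v₅, v₆, v₇` (zero-indexed: `subChain k` is `v_{k+3}`). -/
def subChain : Fin 5 → Vtx := fun i => chainVtx ⟨(i : ℕ) + 2, by omega⟩

instance (i j : Vtx) : Decidable (LonneEdge i j) := by
  unfold LonneEdge; infer_instance

lemma artin_rel_one {r : FreeGroup Vtx} (hr : r ∈ artinRels) :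
    PresentedGroup.mk artinRels r = 1 :=
  (QuotientGroup.eq_one_iff _).mpr (Subgroup.subset_normalClosure hr)

lemma artin_comm {v w : Vtx} (hne : v ≠ w) (h : ¬ LonneEdge v w) :
    σ v * σ w = σ w * σ v := by
  have h1 : σ v * σ w * (σ v)⁻¹ * (σ w)⁻¹ = 1 := by
    have := artin_rel_one ⟨v, w, Or.inl ⟨hne, h, rfl⟩⟩
    simp only [map_mul, map_inv] at this; exact this
  have h2 : σ v * σ w * (σ w * σ v)⁻¹ = 1 := by
    rw [mul_inv_rev, ← mul_assoc]; exact h1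
  exact mul_inv_eq_one.mp h2

lemma artin_braid {v w : Vtx} (h : LonneEdge v w) :
    σ v * σ w * σ v = σ w * σ v * σ w := by
  have h1 : σ v * σ w * σ v * (σ w * σ v * σ w)⁻¹ = 1 := by
    have := artin_rel_one ⟨v, w, Or.inr ⟨h, rfl⟩⟩
    simp only [map_mul, map_inv] at this; exact this
  exact mul_inv_eq_one.mp h1

lemma subchain_edge : ∀ i j : Fin 5, (j : ℕ) = (i : ℕ) + 1 →
    LonneEdge (subChain i) (subChain j) := by decide

lemma subchain_far : ∀ i j : Fin 5, (i : ℕ) + 2 ≤ (j : ℕ) →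
    subChain i ≠ subChain j ∧ ¬ LonneEdge (subChain i) (subChain j) := by decide

lemma v1_far : ∀ i : Fin 5,
    subChain i ≠ chainVtx 0 ∧ ¬ LonneEdge (subChain i) (chainVtx 0) := by decide

lemma braid_rel_holds : ∀ r ∈ braidRels 5,
    FreeGroup.lift (fun i => σ (subChain i)) r = 1 := by
  rintro r ⟨i, j, ⟨hij, rfl⟩ | ⟨hij, rfl⟩⟩
  · simp only [map_mul, map_inv, FreeGroup.lift_apply_of]
    rw [mul_inv_eq_one]
    exact artin_braid (subchain_edge i j hij)
  · simp only [map_mul, map_inv, FreeGroup.lift_apply_of]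
    have h := subchain_far i j hij
    have hc := artin_comm h.1 h.2
    rw [hc]
    group

/-- There is a homomorphism `ψ : Br₆ → G(Γ)` with `ψ(t_i) = σ_{v_{i+2}}`, whose image lies
in the centralizer of `σ_{v₁}`; in particular each `σ_{v_j}`, `3 ≤ j ≤ 7`, commutes with
`σ_{v₁}` in `G(Γ)`. -/
theorem exists_hom_Br6_to_centralizer :
    (∃ ψ : Br6 →* ArtinG,
      (∀ i : Fin 5, ψ (PresentedGroup.of i) = σ (subChain i)) ∧
      (∀ x : Br6, Commute (ψ x) (σ (chainVtx 0)))) ∧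
    (∀ i : Fin 5, σ (subChain i) * σ (chainVtx 0) = σ (chainVtx 0) * σ (subChain i)) := by
  have hcomm : ∀ i : Fin 5, σ (subChain i) * σ (chainVtx 0) = σ (chainVtx 0) * σ (subChain i) :=
    fun i => artin_comm (v1_far i).1 (v1_far i).2
  refine ⟨⟨PresentedGroup.toGroup braid_rel_holds, fun i => PresentedGroup.toGroup.of _, ?_⟩, hcomm⟩
  intro x
  have hx : x ∈ (Subgroup.centralizer {σ (chainVtx 0)}).comap (PresentedGroup.toGroup braid_rel_holds) := by
    refine PresentedGroup.generated_by _ _ ?_ x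
    intro j
    simp only [Subgroup.mem_comap]
    rw [Subgroup.mem_centralizer_iff]
    intro y hy
    rw [Set.mem_singleton_iff] at hy
    subst hy
    rw [PresentedGroup.toGroup.of]
    exact (hcomm j).symm
  exact (Subgroup.mem_centralizer_iff.mp hx _ (Set.mem_singleton _)).symm
end

section
/- The Hefez–Lazzeri intersection matrix M (a 16×16 skew-symmetric integer matrix) has rank 10 over ℚ; equivalently, its kernel has dimension 6. -/
/-- Lexicographic (first coordinate first) strict order on `{0,1}^4`. -/
def lexLt (i j : Vtx) : Prop :=
  ∃ μ : Fin 4, (∀ ν : Fin 4, ν < μ → i ν = j ν) ∧ i μ < j μ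

/-- The Hefez–Lazzeri sign condition: `(i_μ − j_μ)·(i_ν − j_ν) ≥ 0` for all `μ, ν`. -/
def sameSign (i j : Vtx) : Prop :=
  ∀ μ ν : Fin 4,
    0 ≤ (((i μ : ℕ) : ℤ) - ((j μ : ℕ) : ℤ)) * (((i ν : ℕ) : ℤ) - ((j ν : ℕ) : ℤ))

/-- The number of coordinates in which `i` and `j` differ. -/
def hamming (i j : Vtx) : ℕ := (Finset.univ.filter fun ν : Fin 4 => i ν ≠ j ν).card

open scoped Classical in
/-- The entry of the Hefez–Lazzeri matrix for `i < j` lexicographically. -/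
noncomputable def hlUpper (i j : Vtx) : ℚ :=
  if sameSign i j then -(-1 : ℚ) ^ hamming i j else 0

open scoped Classical in
/-- The Hefez–Lazzeri intersection matrix, a skew-symmetric `16 × 16` matrix. -/
noncomputable def hlMatrix : Matrix Vtx Vtx ℚ := fun i j =>
  if lexLt i j then hlUpper i j else if lexLt j i then -(hlUpper j i) else 0

def NmZ : Matrix (Fin 16) (Fin 16) ℤ :=
  !![0, 1, 1, -1, 1, -1, -1, 1, 1, -1, -1, 1, -1, 1, 1, -1;
    -1, 0, 0, 1, 0, 1, 0, -1, 0, 1, 0, -1, 0, -1, 0, 1;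
    -1, 0, 0, 1, 0, 0, 1, -1, 0, 0, 1, -1, 0, 0, -1, 1;
    1, -1, -1, 0, 0, 0, 0, 1, 0, 0, 0, 1, 0, 0, 0, -1;
    -1, 0, 0, 0, 0, 1, 1, -1, 0, 0, 0, 0, 1, -1, -1, 1;
    1, -1, 0, 0, -1, 0, 0, 1, 0, 0, 0, 0, 0, 1, 0, -1;
    1, 0, -1, 0, -1, 0, 0, 1, 0, 0, 0, 0, 0, 0, 1, -1;
    -1, 1, 1, -1, 1, -1, -1, 0, 0, 0, 0, 0, 0, 0, 0, 1;
    -1, 0, 0, 0, 0, 0, 0, 0, 0, 1, 1, -1, 1, -1, -1, 1;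
    1, -1, 0, 0, 0, 0, 0, 0, -1, 0, 0, 1, 0, 1, 0, -1;
    1, 0, -1, 0, 0, 0, 0, 0, -1, 0, 0, 1, 0, 0, 1, -1;
    -1, 1, 1, -1, 0, 0, 0, 0, 1, -1, -1, 0, 0, 0, 0, 1;
    1, 0, 0, 0, -1, 0, 0, 0, -1, 0, 0, 0, 0, 1, 1, -1;
    -1, 1, 0, 0, 1, -1, 0, 0, 1, -1, 0, 0, -1, 0, 0, 1;
    -1, 0, 1, 0, 1, 0, -1, 0, 1, 0, -1, 0, -1, 0, 0, 1;
    1, -1, -1, 1, -1, 1, 1, -1, -1, 1, 1, -1, 1, -1, -1, 0]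
def CmZ : Matrix (Fin 16) (Fin 10) ℤ :=
  !![0, 1, 1, -1, 1, -1, -1, 1, 1, -1;
    -1, 0, 0, 1, 0, 1, 0, -1, 0, 1;
    -1, 0, 0, 1, 0, 0, 1, -1, 0, 0;
    1, -1, -1, 0, 0, 0, 0, 1, 0, 0;
    -1, 0, 0, 0, 0, 1, 1, -1, 0, 0;
    1, -1, 0, 0, -1, 0, 0, 1, 0, 0;
    1, 0, -1, 0, -1, 0, 0, 1, 0, 0;
    -1, 1, 1, -1, 1, -1, -1, 0, 0, 0;
    -1, 0, 0, 0, 0, 0, 0, 0, 0, 1;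
    1, -1, 0, 0, 0, 0, 0, 0, -1, 0;
    1, 0, -1, 0, 0, 0, 0, 0, -1, 0;
    -1, 1, 1, -1, 0, 0, 0, 0, 1, -1;
    1, 0, 0, 0, -1, 0, 0, 0, -1, 0;
    -1, 1, 0, 0, 1, -1, 0, 0, 1, -1;
    -1, 0, 1, 0, 1, 0, -1, 0, 1, 0;
    1, -1, -1, 1, -1, 1, 1, -1, -1, 1]
def RmZ : Matrix (Fin 10) (Fin 16) ℤ :=
  !![1, 0, 0, 0, 0, 0, 0, 0, 0, 0, 0, 0, 0, 0, 0, -1;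
    0, 1, 0, 0, 0, 0, 0, 0, 0, 0, 0, 0, 0, 0, 1, -1;
    0, 0, 1, 0, 0, 0, 0, 0, 0, 0, 0, 0, 0, 1, 0, -1;
    0, 0, 0, 1, 0, 0, 0, 0, 0, 0, 0, 0, -1, 1, 1, -1;
    0, 0, 0, 0, 1, 0, 0, 0, 0, 0, 0, 1, 0, 0, 0, -1;
    0, 0, 0, 0, 0, 1, 0, 0, 0, 0, -1, 1, 0, 0, 1, -1;
    0, 0, 0, 0, 0, 0, 1, 0, 0, 0, 1, 0, 1, 0, -1, -1;
    0, 0, 0, 0, 0, 0, 0, 1, 0, 0, 0, 1, 0, 1, 1, -2;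
    0, 0, 0, 0, 0, 0, 0, 0, 1, 0, 0, -1, 0, -1, -1, 1;
    0, 0, 0, 0, 0, 0, 0, 0, 0, 1, 1, -1, 1, -1, -1, 0]
def SmZ : Matrix (Fin 10) (Fin 10) ℤ :=
  !![0, 1, 1, -1, 1, -1, -1, 1, 1, -1;
    -1, 0, 0, 1, 0, 1, 0, -1, 0, 1;
    -1, 0, 0, 1, 0, 0, 1, -1, 0, 0;
    1, -1, -1, 0, 0, 0, 0, 1, 0, 0;
    -1, 0, 0, 0, 0, 1, 1, -1, 0, 0;
    1, -1, 0, 0, -1, 0, 0, 1, 0, 0;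
    1, 0, -1, 0, -1, 0, 0, 1, 0, 0;
    -1, 1, 1, -1, 1, -1, -1, 0, 0, 0;
    -1, 0, 0, 0, 0, 0, 0, 0, 0, 1;
    1, -1, 0, 0, 0, 0, 0, 0, -1, 0]
def TmZ : Matrix (Fin 10) (Fin 10) ℤ :=
  !![0, -1, -1, -1, -1, -1, -1, -2, 1, 0;
    1, 0, 0, -1, 0, -1, 1, -1, 1, 1;
    1, 0, 0, -1, 0, 0, 0, -1, 1, 1;
    1, 1, 1, 0, 0, 0, 1, 0, 0, 1;
    1, 0, 0, 0, 0, -1, 0, -1, 1, 1;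
    1, 1, 0, 0, 1, 0, 1, 0, 0, 1;
    1, -1, 0, -1, 0, -1, 0, -2, 2, 1;
    2, 1, 1, 0, 1, 0, 2, 0, 1, 2;
    -1, -1, -1, 0, -1, 0, -2, -1, 0, -2;
    0, -1, -1, -1, -1, -1, -1, -2, 2, 0]

def PmZ : Matrix (Fin 10) (Fin 16) ℤ := fun k a => if (k : ℕ) = (a : ℕ) then 1 else 0
def QmZ : Matrix (Fin 16) (Fin 10) ℤ := fun a k => if (k : ℕ) = (a : ℕ) then 1 else 0

def eV : Vtx ≃ Fin 16 := finFunctionFinEquiv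

instance instDecLexLt (i j : Vtx) : Decidable (lexLt i j) := by
  unfold lexLt; infer_instance

instance instDecSameSign (i j : Vtx) : Decidable (sameSign i j) := by
  unfold sameSign; infer_instance

/-- Computable integer version of `hlMatrix`. -/
def hlZ (i j : Vtx) : ℤ :=
  if lexLt i j then (if sameSign i j then -(-1 : ℤ) ^ hamming i j else 0)
  else if lexLt j i then -(if sameSign j i then -(-1 : ℤ) ^ hamming j i else 0)
  else 0

lemma hl_eq (i j : Vtx) : hlMatrix i j = ((hlZ i j : ℤ) : ℚ) := by
  unfold hlMatrix hlUpper hlZ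
  split_ifs <;> push_cast <;> ring

set_option maxHeartbeats 2000000 in
lemma hl_key : ∀ i j : Vtx, hlZ i j = NmZ (eV i) (eV j) := by
  decide

def castQ : ℤ →+* ℚ := Int.castRingHom ℚ

lemma hl_submatrix :
    hlMatrix = (NmZ.map castQ).submatrix ⇑eV ⇑eV := by
  funext i j
  rw [hl_eq, hl_key i j]
  rfl

lemma nm_fact : NmZ = CmZ * RmZ := by decide

lemma sm_fact : PmZ * (NmZ * QmZ) = SmZ := by decide

lemma sm_inv : SmZ * TmZ = 1 := by decide

lemma smQ_rank : ((SmZ.map castQ) : Matrix (Fin 10) (Fin 10) ℚ).rank = 10 := by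
  have h1 : SmZ.map castQ * TmZ.map castQ = 1 := by
    rw [← Matrix.map_mul, sm_inv, Matrix.map_one castQ castQ.map_zero castQ.map_one]
  have hu : IsUnit (SmZ.map castQ) :=
    ⟨⟨SmZ.map castQ, TmZ.map castQ, h1, mul_eq_one_comm.mp h1⟩, rfl⟩
  rw [Matrix.rank_of_isUnit _ hu, Fintype.card_fin]

/-- The Hefez–Lazzeri intersection matrix has rank `10` over `ℚ` (equivalently, its
kernel has dimension `6`). -/
theorem hl_matrix_rank : hlMatrix.rank = 10 := by
  rw [hl_submatrix, Matrix.rank_submatrix]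
  refine le_antisymm ?_ ?_
  · calc (NmZ.map castQ).rank = (CmZ.map castQ * RmZ.map castQ).rank := by
          rw [← Matrix.map_mul, ← nm_fact]
      _ ≤ (CmZ.map castQ).rank := Matrix.rank_mul_le_left _ _
      _ ≤ 10 := by simpa using (CmZ.map castQ).rank_le_card_width
  · calc (10 : ℕ) = (SmZ.map castQ).rank := smQ_rank.symm
      _ = (PmZ.map castQ * (NmZ.map castQ * QmZ.map castQ)).rank := by
          rw [← Matrix.map_mul, ← Matrix.map_mul, sm_fact]
      _ ≤ (NmZ.map castQ * QmZ.map castQ).rank := Matrix.rank_mul_le_right _ _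
      _ ≤ (NmZ.map castQ).rank := Matrix.rank_mul_le_left _ _
end

section
/- Let n ≥ 1 and let v ∈ ℚ^{2n} be nonzero. Then the symplectic transvection T_v belongs to the symplectic group Sp(2n,ℚ), and T_v is not conjugate in Sp(2n,ℚ) to its inverse: there is no S ∈ Sp(2n,ℚ) with S · T_v · S⁻¹ = T_v⁻¹. -/
open Matrix

section Helpers
set_option linter.unusedSectionVars false

variable {m k p : Type*} [Fintype m] [Fintype k] [Fintype p]

lemma myMul_vecMulVec (M : Matrix m k ℚ) (u : k → ℚ) (w : p → ℚ) :
    M * vecMulVec u w = vecMulVec (M *ᵥ u) w := by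
  ext i j
  simp [mul_apply, vecMulVec_apply, mulVec, dotProduct, Finset.sum_mul, mul_assoc]

lemma myVecMulVec_mul (u : m → ℚ) (w : k → ℚ) (M : Matrix k p ℚ) :
    vecMulVec u w * M = vecMulVec u (w ᵥ* M) := by
  ext i j
  simp [mul_apply, vecMulVec_apply, vecMul, dotProduct, Finset.mul_sum, mul_assoc]

lemma myVecMulVec_mul_vecMulVec (u : m → ℚ) (w x : k → ℚ) (y : p → ℚ) :
    vecMulVec u w * vecMulVec x y = (w ⬝ᵥ x) • vecMulVec u y := by
  rw [myVecMulVec_mul]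
  ext i j
  simp [vecMulVec_apply, vecMul, dotProduct, Finset.sum_mul, Finset.mul_sum]
  ring_nf
  congr 1
  ext
  ring

lemma myVecMulVec_transpose (u : m → ℚ) (w : k → ℚ) :
    (vecMulVec u w)ᵀ = vecMulVec w u := by
  ext i j; simp [vecMulVec_apply, mul_comm]

end Helpers

/-- The symplectic transvection associated to `v ∈ ℚ^{2n}`: the matrix of the linear map
`x ↦ x + ω(x,v)·v`, where `ω` is the alternating form with matrix `J`. Its entries are
`δ_{ij} + v_i · (J ·ᵥ v)_j`. -/
def sympTransvection (n : ℕ) (v : (Fin n ⊕ Fin n) → ℚ) :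
    Matrix (Fin n ⊕ Fin n) (Fin n ⊕ Fin n) ℚ :=
  1 + Matrix.of (fun i j => v i * (Matrix.J (Fin n) ℚ *ᵥ v) j)

/-- A symplectic transvection in a nonzero direction lies in `Sp(2n, ℚ)` and is not
conjugate in `Sp(2n, ℚ)` to its inverse. -/
theorem transvection_not_conjugate_inverse (n : ℕ) (hn : 1 ≤ n)
    (v : (Fin n ⊕ Fin n) → ℚ) (hv : v ≠ 0) :
    sympTransvection n v ∈ Matrix.symplecticGroup (Fin n) ℚ ∧
    ¬ ∃ S ∈ Matrix.symplecticGroup (Fin n) ℚ,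
        S * sympTransvection n v * S⁻¹ = (sympTransvection n v)⁻¹ := by
  set Jm := Matrix.J (Fin n) ℚ with hJm
  set A := vecMulVec v (Jm *ᵥ v) with hA
  have hT : sympTransvection n v = 1 + A := rfl
  -- J *ᵥ (J *ᵥ x) = -x
  have hJJ : ∀ x : (Fin n ⊕ Fin n) → ℚ, Jm *ᵥ (Jm *ᵥ x) = -x := by
    intro x
    rw [mulVec_mulVec, Matrix.J_squared, neg_mulVec, one_mulVec]
  -- vecMul x J = -(J *ᵥ x)
  have hvm : ∀ x : (Fin n ⊕ Fin n) → ℚ, x ᵥ* Jm = -(Jm *ᵥ x) := by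
    intro x
    rw [← mulVec_transpose, Matrix.J_transpose, neg_mulVec]
  have h0 : (Jm *ᵥ v) ⬝ᵥ v = 0 := by
    have h1 : v ⬝ᵥ (Jm *ᵥ v) = (v ᵥ* Jm) ⬝ᵥ v := dotProduct_mulVec v Jm v
    rw [hvm, neg_dotProduct, ← dotProduct_comm] at h1
    linarith
  have h0' : v ⬝ᵥ (Jm *ᵥ v) = 0 := by rw [dotProduct_comm]; exact h0
  have hA2 : A * A = 0 := by
    rw [hA, myVecMulVec_mul_vecMulVec, h0, zero_smul]
  have hTinv : (sympTransvection n v)⁻¹ = 1 - A := by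
    apply inv_eq_right_inv
    rw [hT, add_mul, one_mul, mul_sub, mul_one, hA2, sub_zero]
    abel
  have hmem : sympTransvection n v ∈ Matrix.symplecticGroup (Fin n) ℚ := by
    rw [SymplecticGroup.mem_iff, hT]
    have hAJ : A * Jm = vecMulVec v v := by
      rw [hA, myVecMulVec_mul, hvm, hJJ, neg_neg]
    have hAt : (1 + A)ᵀ = 1 + vecMulVec (Jm *ᵥ v) v := by
      rw [transpose_add, transpose_one, hA, myVecMulVec_transpose]
    rw [hAt, add_mul, one_mul, hAJ, mul_add, mul_one, add_mul,
      myMul_vecMulVec, hJJ, myVecMulVec_mul_vecMulVec, h0', zero_smul, add_zero]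
    have hneg : vecMulVec (-v) v = -vecMulVec v v := by
      ext i j; simp [vecMulVec_apply]
    rw [hneg]
    abel
  refine ⟨hmem, ?_⟩
  rintro ⟨S, hS, hconj⟩
  have hdet : IsUnit S.det := SymplecticGroup.symplectic_det hS
  have hST : S * sympTransvection n v = (1 - A) * S := by
    have := congrArg (· * S) hconj
    simpa [mul_assoc, nonsing_inv_mul S hdet, hTinv] using this
  have hSA : S * A = -(A * S) := by
    rw [hT, mul_add, mul_one, sub_mul, one_mul] at hST
    linear_combination (norm := module) hST
  -- rewrite as vecMulVec equation
  have hE : vecMulVec (S *ᵥ v) (Jm *ᵥ v) = -vecMulVec v ((Jm *ᵥ v) ᵥ* S) := by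
    rw [← myMul_vecMulVec, ← hA, hSA, hA, myVecMulVec_mul]
  have hJv : Jm *ᵥ v ≠ 0 := by
    intro h
    apply hv
    have := hJJ v
    rw [h, mulVec_zero] at this
    simpa using this.symm
  obtain ⟨j₀, hj₀⟩ := Function.ne_iff.mp hJv
  obtain ⟨i₀, hi₀⟩ := Function.ne_iff.mp hv
  simp only [Pi.zero_apply] at hj₀ hi₀
  set c := (Jm *ᵥ v) j₀ with hc
  set u := (Jm *ᵥ v) ᵥ* S with hu
  have hEij : ∀ i j, (S *ᵥ v) i * (Jm *ᵥ v) j = -(v i * u j) := by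
    intro i j
    have := congrFun (congrFun hE i) j
    simpa [vecMulVec_apply, neg_apply] using this
  set kk := -(u j₀) / c with hk
  have hw : ∀ i, (S *ᵥ v) i = kk * v i := by
    intro i
    have h := hEij i j₀
    rw [hk]
    field_simp
    linear_combination h
  have hus : ∀ j, u j = -(kk * (Jm *ᵥ v) j) := by
    intro j
    have h := hEij i₀ j
    rw [hw i₀] at h
    have h2 : v i₀ * u j = v i₀ * -(kk * (Jm *ᵥ v) j) := by linear_combination h
    exact mul_left_cancel₀ hi₀ h2
  -- symplectic relation: Sᵀ * J * S = J
  have hS' : Sᵀ * Jm * S = Jm := (SymplecticGroup.mem_iff').mp hS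
  have hrel : Sᵀ *ᵥ (Jm *ᵥ (S *ᵥ v)) = Jm *ᵥ v := by
    rw [mulVec_mulVec, mulVec_mulVec, hS']
  have hwv : S *ᵥ v = kk • v := by funext i; rw [hw i]; simp
  have hfin : ∀ j, kk * u j = (Jm *ᵥ v) j := by
    intro j
    have := congrFun hrel j
    rw [hwv, mulVec_smul, mulVec_smul, mulVec_transpose] at this
    simpa [hu, smul_eq_mul] using this
  have h1 := hfin j₀
  rw [hus j₀] at h1
  have h2 : (kk ^ 2 + 1) * c = 0 := by linear_combination -h1
  rcases mul_eq_zero.mp h2 with h3 | h3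
  · nlinarith [sq_nonneg kk]
  · exact hj₀ h3
end
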